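/- If two probability distributions μ and ν on a finite action set can be coupled by a joint distribution whose probability of disagreement is at most α, and |A^π(s,a)| ≤ ε for all a, then E_{a∼μ}[A^π(s,a)] ≤ 2αε, provided E_{a∼ν}[A^π(s,a)] = 0. -/
import Mathlib


/-- If `μ` and `ν` on a finite action set are coupled by a joint distribution `J` whose
probability of disagreement is at most `α`, `|A(a)| ≤ ε` for all `a`, and the expectation
of `A` under `ν` is zero, then `E_{a∼μ}[A(a)] ≤ 2αε`. -/
theorem coupled_advantage_bound
    {A : Type} [Fintype A] [Nonempty A] [DecidableEq A]
    (μ ν : A → ℝ) (J : A → A → ℝ) (f : A → ℝ) (α ε : ℝ)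
    (hJ0 : ∀ a b, 0 ≤ J a b)
    (hμ : ∀ a, μ a = ∑ b, J a b)
    (hν : ∀ b, ν b = ∑ a, J a b)
    (hdis : (∑ a, ∑ b, if a ≠ b then J a b else 0) ≤ α)
    (hf : ∀ a, |f a| ≤ ε)
    (hν0 : ∑ a, ν a * f a = 0) :
    ∑ a, μ a * f a ≤ 2 * α * ε := by
  have hε : 0 ≤ ε := le_trans (abs_nonneg _) (hf (Classical.arbitrary A))
  have key : ∑ a, μ a * f a = ∑ a, ∑ b, J a b * (f a - f b) := by
    have h1 : ∑ a, μ a * f a = ∑ a, ∑ b, J a b * f a := by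
      refine Finset.sum_congr rfl fun a _ => ?_
      rw [hμ a, Finset.sum_mul]
    have h2 : ∑ a, ∑ b, J a b * f b = 0 := by
      rw [Finset.sum_comm]
      calc ∑ b, ∑ a, J a b * f b = ∑ b, ν b * f b := by
            refine Finset.sum_congr rfl fun b _ => ?_
            rw [hν b, Finset.sum_mul]
        _ = 0 := hν0
    calc ∑ a, μ a * f a = ∑ a, ∑ b, J a b * f a - ∑ a, ∑ b, J a b * f b := by
          rw [h2, h1]; ring
      _ = ∑ a, ∑ b, J a b * (f a - f b) := by
          rw [← Finset.sum_sub_distrib]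
          refine Finset.sum_congr rfl fun a _ => ?_
          rw [← Finset.sum_sub_distrib]
          refine Finset.sum_congr rfl fun b _ => ?_
          ring
  rw [key]
  have step : ∀ a b : A, J a b * (f a - f b) ≤ (if a ≠ b then J a b else 0) * (2 * ε) := by
    intro a b
    by_cases h : a = b
    · simp [h]
    · simp only [h, if_pos, ne_eq, not_false_iff, if_true]
      apply mul_le_mul_of_nonneg_left _ (hJ0 a b)
      have := abs_sub_abs_le_abs_sub (f a) (f b)
      have h1 := hf a; have h2 := hf b
      have : f a - f b ≤ |f a| + |f b| := by
        have := abs_sub (f a) (f b)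
        calc f a - f b ≤ |f a - f b| := le_abs_self _
          _ ≤ |f a| + |f b| := abs_sub _ _
      linarith
  calc ∑ a, ∑ b, J a b * (f a - f b)
      ≤ ∑ a, ∑ b, (if a ≠ b then J a b else 0) * (2 * ε) :=
        Finset.sum_le_sum fun a _ => Finset.sum_le_sum fun b _ => step a b
    _ = (∑ a, ∑ b, if a ≠ b then J a b else 0) * (2 * ε) := by
        rw [Finset.sum_mul]
        exact Finset.sum_congr rfl fun a _ => by rw [Finset.sum_mul]
    _ ≤ α * (2 * ε) := by
        apply mul_le_mul_of_nonneg_right hdis (by linarith)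
    _ = 2 * α * ε := by ring
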